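/- Fix integers n ≥ 1, r ≥ 1, s ≥ 0. Let A_1,…,A_r and Ω_0,…,Ω_s be n×n matrices with entries in ℂ[ħ][[Q^1,…,Q^r,t^0,…,t^s]] such that the first-order operators ∇^a := ħ Q^a ∂/∂Q^a + A_a (1 ≤ a ≤ r) and ∇_i := ħ ∂/∂t^i + Ω_i (0 ≤ i ≤ s), acting on length-n column vectors over ℂ((ħ^{-1}))[[Q,t]], pairwise commute, and such that p_a := A_a|_{Q=t=0} has entries in ℂ (i.e. is independent of ħ). Then there exists a unique n×n matrix L with entries in ℂ((ħ^{-1}))[[Q,t]] satisfying ħ ∂L/∂t^i + Ω_i L = 0 for all 0 ≤ i ≤ s, ħ Q^a ∂L/∂Q^a + A_a L − L p_a = 0 for all 1 ≤ a ≤ r, and L|_{Q=t=0} = Id_n. -/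

import Mathlib

noncomputable section

/-- `ℂ((ħ⁻¹))`, realized as formal Laurent series (Hahn series over `ℤ`) in the
variable `X = ħ⁻¹`; the coefficient of `ħ^k` is the coefficient at `z = -k`. -/
abbrev LH : Type := LaurentSeries ℂ

/-- The element `ħ = X⁻¹`: the Hahn series with single coefficient `1` in degree `-1`. -/
def hbar : LH := HahnSeries.single (-1 : ℤ) 1

/-- `f` lies in the subring `ℂ[ħ]` (no positive powers of the variable `X = ħ⁻¹`). -/
def InPolyH (f : LH) : Prop := ∀ z : ℤ, 0 < z → f.coeff z = 0

/-- `f` lies in the subring `ℂ[[ħ⁻¹]]`. -/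
def InPSinv (f : LH) : Prop := ∀ z : ℤ, z < 0 → f.coeff z = 0

/-- `f` lies in `ħ⁻¹ · ℂ[[ħ⁻¹]]` (only strictly negative powers of `ħ`). -/
def InPSinvPos (f : LH) : Prop := ∀ z : ℤ, z ≤ 0 → f.coeff z = 0

/-- `f` is a constant (a complex scalar), i.e. independent of `ħ`. -/
def IsConstL (f : LH) : Prop := ∀ z : ℤ, z ≠ 0 → f.coeff z = 0

section ops

variable {σ R : Type} [CommRing R] {n : ℕ}

/-- Formal partial derivative `∂/∂x` on multivariate formal power series. -/
def pd (x : σ) (f : MvPowerSeries σ R) : MvPowerSeries σ R :=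
  fun d => ((d x + 1 : ℕ) : R) * MvPowerSeries.coeff (d + Finsupp.single x 1) f

/-- Euler derivative `x·∂/∂x` on multivariate formal power series. -/
def eulerD (x : σ) (f : MvPowerSeries σ R) : MvPowerSeries σ R :=
  fun d => ((d x : ℕ) : R) * MvPowerSeries.coeff d f

/-- Entrywise partial derivative of a matrix of power series. -/
def mpd (x : σ) (M : Matrix (Fin n) (Fin n) (MvPowerSeries σ R)) :
    Matrix (Fin n) (Fin n) (MvPowerSeries σ R) := M.map (pd x)

/-- Entrywise Euler derivative of a matrix of power series. -/
def meu (x : σ) (M : Matrix (Fin n) (Fin n) (MvPowerSeries σ R)) :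
    Matrix (Fin n) (Fin n) (MvPowerSeries σ R) := M.map (eulerD x)

/-- A constant matrix, viewed as a matrix of power series. -/
def mC (M : Matrix (Fin n) (Fin n) R) : Matrix (Fin n) (Fin n) (MvPowerSeries σ R) :=
  M.map (MvPowerSeries.C : R →+* MvPowerSeries σ R)

/-- Constant term (restriction to `Q = t = 0`) of a matrix of power series. -/
def m0 (M : Matrix (Fin n) (Fin n) (MvPowerSeries σ R)) : Matrix (Fin n) (Fin n) R :=
  M.map (MvPowerSeries.constantCoeff : MvPowerSeries σ R →+* R)

end ops

section lops

variable {σ : Type} {n : ℕ}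

/-- The scalar `ħ` inside `ℂ((ħ⁻¹))[[Q,t]]`. -/
def hbarC (σ : Type) : MvPowerSeries σ LH := (MvPowerSeries.C : LH →+* MvPowerSeries σ LH) hbar

/-- The entries of the matrix `M` lie in `ℂ[ħ][[Q,t]]`. -/
def MatPolyH (M : Matrix (Fin n) (Fin n) (MvPowerSeries σ LH)) : Prop :=
  ∀ (i j : Fin n) (d : σ →₀ ℕ), InPolyH (MvPowerSeries.coeff d (M i j))

/-- The entries of the matrix `M` lie in `ℂ[[Q,t]]`, i.e. are independent of `ħ`. -/
def MatNoH (M : Matrix (Fin n) (Fin n) (MvPowerSeries σ LH)) : Prop :=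
  ∀ (i j : Fin n) (d : σ →₀ ℕ), IsConstL (MvPowerSeries.coeff d (M i j))

/-- The first-order operator `v ↦ ħ·(x ∂/∂x)v + A·v` on column vectors. -/
def nablaE (x : σ) (A : Matrix (Fin n) (Fin n) (MvPowerSeries σ LH))
    (v : Fin n → MvPowerSeries σ LH) : Fin n → MvPowerSeries σ LH :=
  fun i => hbarC σ * eulerD x (v i) + A.mulVec v i

/-- The first-order operator `v ↦ ħ·(∂/∂x)v + A·v` on column vectors. -/
def nablaP (x : σ) (A : Matrix (Fin n) (Fin n) (MvPowerSeries σ LH))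
    (v : Fin n → MvPowerSeries σ LH) : Fin n → MvPowerSeries σ LH :=
  fun i => hbarC σ * pd x (v i) + A.mulVec v i

end lops

namespace QDM

lemma hbar_ne_zero : hbar ≠ 0 := HahnSeries.single_ne_zero one_ne_zero

lemma C_mul_coeff (c : ℂ) (f : LH) (z : ℤ) :
    (HahnSeries.C c * f).coeff z = c * f.coeff z := by
  simpa using HahnSeries.coeff_single_mul_add (r := c) (x := f) (a := z) (b := (0:ℤ))

lemma natCast_eq_C (m : ℕ) : ((m : ℕ) : LH) = HahnSeries.C (m : ℂ) := by
  simp [map_natCast]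

lemma natCast_ne_zero {m : ℕ} (hm : m ≠ 0) : ((m : ℕ) : LH) ≠ 0 := by
  rw [natCast_eq_C]
  intro h
  have h2 := HahnSeries.C_injective (Γ := ℤ) (R := ℂ) (h.trans (HahnSeries.C_zero).symm)
  exact hm (by exact_mod_cast h2)

lemma hbar_mul_coeff (f : LH) (z : ℤ) : (hbar * f).coeff z = f.coeff (z + 1) := by
  have h := HahnSeries.coeff_single_mul_add (r := (1:ℂ)) (x := f) (a := z + 1) (b := (-1:ℤ))
  rw [show (z + 1) + (-1 : ℤ) = z by ring, one_mul] at h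
  exact h

lemma isConst_eq {g : LH} (hg : IsConstL g) : g = HahnSeries.C (g.coeff 0) := by
  ext z
  by_cases hz : z = 0
  · subst hz; simp
  · rw [hg z hz, HahnSeries.C_apply, HahnSeries.coeff_single_of_ne hz]

lemma isConst_mul_coeff {g : LH} (hg : IsConstL g) (f : LH) (z : ℤ) :
    (g * f).coeff z = g.coeff 0 * f.coeff z := by
  conv_lhs => rw [isConst_eq hg]
  exact C_mul_coeff _ _ _

end QDM
namespace QDM
open Finset

section deg
variable {σ : Type}

def deg (d : σ →₀ ℕ) : ℕ := d.sum fun _ k => k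

lemma deg_add (a b : σ →₀ ℕ) : deg (a + b) = deg a + deg b :=
  Finsupp.sum_add_index' (fun _ => rfl) (fun _ _ _ => rfl)

lemma deg_zero : deg (0 : σ →₀ ℕ) = 0 := Finsupp.sum_zero_index

lemma deg_eq_zero_iff {d : σ →₀ ℕ} : deg d = 0 ↔ d = 0 := by
  constructor
  · intro h
    ext x
    by_cases hx : x ∈ d.support
    · exact Finset.sum_eq_zero_iff.mp h x hx
    · simpa using Finsupp.notMem_support_iff.mp hx
  · rintro rfl; exact deg_zero

lemma deg_single (x : σ) (k : ℕ) : deg (Finsupp.single x k) = k :=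
  Finsupp.sum_single_index rfl

lemma single_le {d : σ →₀ ℕ} {x : σ} (hx : d x ≠ 0) : Finsupp.single x 1 ≤ d := by
  rw [Finsupp.single_le_iff]; omega

lemma sub_single_add {d : σ →₀ ℕ} {x : σ} (hx : d x ≠ 0) :
    d - Finsupp.single x 1 + Finsupp.single x 1 = d :=
  tsub_add_cancel_of_le (single_le hx)

lemma deg_sub_single {d : σ →₀ ℕ} {x : σ} (hx : d x ≠ 0) :
    deg (d - Finsupp.single x 1) + 1 = deg d := by
  conv_rhs => rw [← sub_single_add hx]
  rw [deg_add, deg_single]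

lemma apply_sub_single [DecidableEq σ] {d : σ →₀ ℕ} {x : σ} (hx : d x ≠ 0) :
    ((d - Finsupp.single x 1 : σ →₀ ℕ)) x + 1 = d x := by
  rw [Finsupp.tsub_apply, Finsupp.single_apply, if_pos rfl]; omega

lemma apply_sub_single_ne [DecidableEq σ] {d : σ →₀ ℕ} {x y : σ} (hxy : y ≠ x) :
    ((d - Finsupp.single x 1 : σ →₀ ℕ)) y = d y := by
  rw [Finsupp.tsub_apply, Finsupp.single_apply, if_neg (fun h => hxy h.symm)]; omega

lemma antidiag_fst_add_snd [DecidableEq σ] {d : σ →₀ ℕ} {p : (σ →₀ ℕ) × (σ →₀ ℕ)}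
    (hp : p ∈ antidiagonal d) : p.1 + p.2 = d := mem_antidiagonal.mp hp

lemma antidiag_deg_snd_le [DecidableEq σ] {d : σ →₀ ℕ} {p : (σ →₀ ℕ) × (σ →₀ ℕ)}
    (hp : p ∈ antidiagonal d) : deg p.2 ≤ deg d := by
  rw [← antidiag_fst_add_snd hp, deg_add]; omega

lemma antidiag_deg_snd_lt [DecidableEq σ] {d : σ →₀ ℕ} {p : (σ →₀ ℕ) × (σ →₀ ℕ)}
    (hp : p ∈ antidiagonal d) (h2 : p.2 ≠ d) : deg p.2 < deg d := by
  have h := antidiag_fst_add_snd hp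
  have h1 : p.1 ≠ 0 := by
    intro h0
    rw [h0, zero_add] at h
    exact h2 h
  have : deg p.1 ≠ 0 := fun hh => h1 (deg_eq_zero_iff.mp hh)
  rw [← h, deg_add]; omega

end deg

section cM

variable {σ : Type} [DecidableEq σ] {n : ℕ}

abbrev MS (σ : Type) := MvPowerSeries σ LH

/-- coefficient matrix -/
def cM (d : σ →₀ ℕ) (M : Matrix (Fin n) (Fin n) (MS σ)) : Matrix (Fin n) (Fin n) LH :=
  M.map (MvPowerSeries.coeff d)

lemma cM_apply (d : σ →₀ ℕ) (M : Matrix (Fin n) (Fin n) (MS σ)) (i j : Fin n) :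
    cM d M i j = MvPowerSeries.coeff d (M i j) := rfl

lemma ext_of_cM {M N : Matrix (Fin n) (Fin n) (MS σ)} (h : ∀ d, cM d M = cM d N) : M = N :=
  Matrix.ext fun i j => MvPowerSeries.ext fun d => congrFun (congrFun (h d) i) j

lemma cM_zero (d : σ →₀ ℕ) : cM d (0 : Matrix (Fin n) (Fin n) (MS σ)) = 0 := by
  ext i j; simp [cM_apply]

lemma cM_sub (d : σ →₀ ℕ) (M N : Matrix (Fin n) (Fin n) (MS σ)) :
    cM d (M - N) = cM d M - cM d N := by
  ext i j; simp [cM_apply, Matrix.sub_apply]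

lemma cM_add (d : σ →₀ ℕ) (M N : Matrix (Fin n) (Fin n) (MS σ)) :
    cM d (M + N) = cM d M + cM d N := by
  ext i j; simp [cM_apply, Matrix.add_apply]

lemma cM_mul (d : σ →₀ ℕ) (M N : Matrix (Fin n) (Fin n) (MS σ)) :
    cM d (M * N) = ∑ p ∈ antidiagonal d, cM p.1 M * cM p.2 N := by
  ext i j
  rw [cM_apply, Matrix.mul_apply, map_sum]
  simp_rw [MvPowerSeries.coeff_mul]
  rw [Finset.sum_comm]
  simp [Matrix.sum_apply, Matrix.mul_apply, cM_apply]

lemma cM_smul_hbarC (d : σ →₀ ℕ) (M : Matrix (Fin n) (Fin n) (MS σ)) :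
    cM d (hbarC σ • M) = hbar • cM d M := by
  ext i j
  simp [cM_apply, Matrix.smul_apply, hbarC, smul_eq_mul, MvPowerSeries.coeff_C_mul]

lemma cM_mpd (d : σ →₀ ℕ) (x : σ) (M : Matrix (Fin n) (Fin n) (MS σ)) :
    cM d (mpd x M) = ((d x + 1 : ℕ) : LH) • cM (d + Finsupp.single x 1) M := by
  ext i j
  simp [cM_apply, mpd, Matrix.map_apply, pd, Matrix.smul_apply, smul_eq_mul,
    MvPowerSeries.coeff_apply]

lemma cM_meu (d : σ →₀ ℕ) (x : σ) (M : Matrix (Fin n) (Fin n) (MS σ)) :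
    cM d (meu x M) = ((d x : ℕ) : LH) • cM d M := by
  ext i j
  simp [cM_apply, meu, Matrix.map_apply, eulerD, Matrix.smul_apply, smul_eq_mul,
    MvPowerSeries.coeff_apply]

lemma cM_mC (d : σ →₀ ℕ) (P : Matrix (Fin n) (Fin n) LH) :
    cM d (mC P : Matrix (Fin n) (Fin n) (MS σ)) = if d = 0 then P else 0 := by
  split_ifs with h
  · subst h; ext i j; simp [cM_apply, mC, Matrix.map_apply, MvPowerSeries.coeff_C]
  · ext i j; simp [cM_apply, mC, Matrix.map_apply, MvPowerSeries.coeff_C, h]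

lemma cM_mul_mC (d : σ →₀ ℕ) (M : Matrix (Fin n) (Fin n) (MS σ))
    (P : Matrix (Fin n) (Fin n) LH) : cM d (M * mC P) = cM d M * P := by
  rw [cM_mul, Finset.sum_eq_single (d, (0 : σ →₀ ℕ))]
  · rw [cM_mC]; simp
  · intro p hp hne
    have h := antidiag_fst_add_snd hp
    have h2 : p.2 ≠ 0 := by
      rintro h0
      exact hne (Prod.ext (by rw [← h, h0, add_zero]) h0)
    rw [cM_mC, if_neg h2, mul_zero]
  · intro h
    exact absurd (Finset.HasAntidiagonal.mem_antidiagonal.mpr (by simp)) h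

lemma m0_eq_cM (M : Matrix (Fin n) (Fin n) (MS σ)) : m0 M = cM 0 M := by
  ext i j
  simp [m0, cM, Matrix.map_apply, MvPowerSeries.coeff_zero_eq_constantCoeff]

end cM

end QDM
namespace QDM
open Finset

section ders

variable {σ : Type} {n : ℕ}

lemma coeff_pd (x : σ) (f : MS σ) (d : σ →₀ ℕ) :
    MvPowerSeries.coeff d (pd x f) =
      ((d x + 1 : ℕ) : LH) * MvPowerSeries.coeff (d + Finsupp.single x 1) f := rfl

lemma coeff_eulerD (x : σ) (f : MS σ) (d : σ →₀ ℕ) :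
    MvPowerSeries.coeff d (eulerD x f) = ((d x : ℕ) : LH) * MvPowerSeries.coeff d f := rfl

lemma pd_add (x : σ) (f g : MS σ) : pd x (f + g) = pd x f + pd x g := by
  apply MvPowerSeries.ext; intro d
  simp [coeff_pd, map_add, mul_add]

lemma eulerD_add (x : σ) (f g : MS σ) : eulerD x (f + g) = eulerD x f + eulerD x g := by
  apply MvPowerSeries.ext; intro d
  simp [coeff_eulerD, map_add, mul_add]

lemma pd_sum (x : σ) {ι : Type*} (t : Finset ι) (f : ι → MS σ) :
    pd x (∑ k ∈ t, f k) = ∑ k ∈ t, pd x (f k) := by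
  apply MvPowerSeries.ext; intro d
  rw [coeff_pd, map_sum, map_sum, Finset.mul_sum]
  exact Finset.sum_congr rfl fun k _ => rfl

lemma eulerD_sum (x : σ) {ι : Type*} (t : Finset ι) (f : ι → MS σ) :
    eulerD x (∑ k ∈ t, f k) = ∑ k ∈ t, eulerD x (f k) := by
  apply MvPowerSeries.ext; intro d
  rw [coeff_eulerD, map_sum, map_sum, Finset.mul_sum]
  exact Finset.sum_congr rfl fun k _ => rfl

lemma pd_mul_C (x : σ) (f : MS σ) (c : LH) :
    pd x (f * MvPowerSeries.C c) = pd x f * MvPowerSeries.C c := by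
  apply MvPowerSeries.ext; intro d
  rw [coeff_pd, mul_comm f, mul_comm (pd x f), MvPowerSeries.coeff_C_mul,
    MvPowerSeries.coeff_C_mul, coeff_pd]
  ring

lemma eulerD_mul_C (x : σ) (f : MS σ) (c : LH) :
    eulerD x (f * MvPowerSeries.C c) = eulerD x f * MvPowerSeries.C c := by
  apply MvPowerSeries.ext; intro d
  rw [coeff_eulerD, mul_comm f, mul_comm (eulerD x f), MvPowerSeries.coeff_C_mul,
    MvPowerSeries.coeff_C_mul, coeff_eulerD]
  ring

lemma eulerD_one (x : σ) : eulerD x (1 : MS σ) = 0 := by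
  apply MvPowerSeries.ext; intro d
  classical
  rw [coeff_eulerD, MvPowerSeries.coeff_one]
  split_ifs with h
  · subst h; simp
  · simp

lemma mpd_sub (x : σ) (M N : Matrix (Fin n) (Fin n) (MS σ)) :
    mpd x (M - N) = mpd x M - mpd x N := by
  apply Matrix.ext; intro i j
  apply MvPowerSeries.ext; intro d
  simp [mpd, Matrix.map_apply, Matrix.sub_apply, coeff_pd, map_sub, mul_sub]

lemma meu_sub (x : σ) (M N : Matrix (Fin n) (Fin n) (MS σ)) :
    meu x (M - N) = meu x M - meu x N := by
  apply Matrix.ext; intro i j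
  apply MvPowerSeries.ext; intro d
  simp [meu, Matrix.map_apply, Matrix.sub_apply, coeff_eulerD, map_sub, mul_sub]

lemma mpd_add_mat (x : σ) (M N : Matrix (Fin n) (Fin n) (MS σ)) :
    mpd x (M + N) = mpd x M + mpd x N := by
  apply Matrix.ext; intro i j
  simp [mpd, Matrix.map_apply, Matrix.add_apply, pd_add]

lemma meu_add_mat (x : σ) (M N : Matrix (Fin n) (Fin n) (MS σ)) :
    meu x (M + N) = meu x M + meu x N := by
  apply Matrix.ext; intro i j
  simp [meu, Matrix.map_apply, Matrix.add_apply, eulerD_add]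

lemma mpd_mul_mC (x : σ) (M : Matrix (Fin n) (Fin n) (MS σ)) (P : Matrix (Fin n) (Fin n) LH) :
    mpd x (M * mC P) = mpd x M * mC P := by
  apply Matrix.ext; intro i j
  simp only [mpd, Matrix.map_apply, Matrix.mul_apply, mC]
  rw [pd_sum]
  exact Finset.sum_congr rfl fun k _ => pd_mul_C x _ _

lemma meu_mul_mC (x : σ) (M : Matrix (Fin n) (Fin n) (MS σ)) (P : Matrix (Fin n) (Fin n) LH) :
    meu x (M * mC P) = meu x M * mC P := by
  apply Matrix.ext; intro i j
  simp only [meu, Matrix.map_apply, Matrix.mul_apply, mC]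
  rw [eulerD_sum]
  exact Finset.sum_congr rfl fun k _ => eulerD_mul_C x _ _

lemma meu_one (x : σ) : meu x (1 : Matrix (Fin n) (Fin n) (MS σ)) = 0 := by
  apply Matrix.ext; intro i j
  simp only [meu, Matrix.map_apply, Matrix.one_apply, Matrix.zero_apply]
  split_ifs with h
  · exact eulerD_one x
  · apply MvPowerSeries.ext; intro d
    simp [coeff_eulerD]

end ders

section nmat

variable {σ : Type} {n : ℕ}

/-- matrix-level operator `ħ ∂ₓ + B·` -/
def NPm (x : σ) (B M : Matrix (Fin n) (Fin n) (MS σ)) : Matrix (Fin n) (Fin n) (MS σ) :=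
  hbarC σ • mpd x M + B * M

/-- matrix-level operator `ħ x∂ₓ + B·` -/
def NEm (x : σ) (B M : Matrix (Fin n) (Fin n) (MS σ)) : Matrix (Fin n) (Fin n) (MS σ) :=
  hbarC σ • meu x M + B * M

lemma hsmul_mul (M N : Matrix (Fin n) (Fin n) (MS σ)) :
    (hbarC σ • M) * N = hbarC σ • (M * N) := by
  apply Matrix.ext; intro i j
  simp [Matrix.mul_apply, Matrix.smul_apply, smul_eq_mul, Finset.mul_sum, mul_assoc]

lemma NPm_sub (x : σ) (B M N : Matrix (Fin n) (Fin n) (MS σ)) :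
    NPm x B (M - N) = NPm x B M - NPm x B N := by
  apply Matrix.ext; intro i j
  simp [NPm, mpd_sub, Matrix.mul_sub, Matrix.sub_apply, Matrix.add_apply,
    Matrix.smul_apply, smul_eq_mul]
  ring

lemma NEm_sub (x : σ) (B M N : Matrix (Fin n) (Fin n) (MS σ)) :
    NEm x B (M - N) = NEm x B M - NEm x B N := by
  apply Matrix.ext; intro i j
  simp [NEm, meu_sub, Matrix.mul_sub, Matrix.sub_apply, Matrix.add_apply,
    Matrix.smul_apply, smul_eq_mul]
  ring

lemma NPm_add (x : σ) (B M N : Matrix (Fin n) (Fin n) (MS σ)) :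
    NPm x B (M + N) = NPm x B M + NPm x B N := by
  apply Matrix.ext; intro i j
  simp [NPm, mpd_add_mat, Matrix.mul_add, Matrix.add_apply,
    Matrix.smul_apply, smul_eq_mul]
  ring

lemma NEm_add (x : σ) (B M N : Matrix (Fin n) (Fin n) (MS σ)) :
    NEm x B (M + N) = NEm x B M + NEm x B N := by
  apply Matrix.ext; intro i j
  simp [NEm, meu_add_mat, Matrix.mul_add, Matrix.add_apply,
    Matrix.smul_apply, smul_eq_mul]
  ring

lemma NPm_mul_mC (x : σ) (B M : Matrix (Fin n) (Fin n) (MS σ)) (P : Matrix (Fin n) (Fin n) LH) :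
    NPm x B (M * mC P) = NPm x B M * mC P := by
  unfold NPm
  rw [mpd_mul_mC, ← Matrix.mul_assoc, Matrix.add_mul, hsmul_mul]

lemma NEm_mul_mC (x : σ) (B M : Matrix (Fin n) (Fin n) (MS σ)) (P : Matrix (Fin n) (Fin n) LH) :
    NEm x B (M * mC P) = NEm x B M * mC P := by
  unfold NEm
  rw [meu_mul_mC, ← Matrix.mul_assoc, Matrix.add_mul, hsmul_mul]

lemma NEm_one (x : σ) (B : Matrix (Fin n) (Fin n) (MS σ)) : NEm x B 1 = B := by
  apply Matrix.ext; intro i j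
  simp [NEm, meu_one, Matrix.add_apply, Matrix.smul_apply, smul_eq_mul]

lemma col_NPm (x : σ) (B M : Matrix (Fin n) (Fin n) (MS σ)) (k : Fin n) :
    (fun i' => NPm x B M i' k) = nablaP x B (fun i' => M i' k) := by
  funext i'
  simp [NPm, nablaP, Matrix.add_apply, Matrix.smul_apply, smul_eq_mul, mpd,
    Matrix.map_apply, Matrix.mulVec, Matrix.mul_apply, dotProduct]

lemma col_NEm (x : σ) (B M : Matrix (Fin n) (Fin n) (MS σ)) (k : Fin n) :
    (fun i' => NEm x B M i' k) = nablaE x B (fun i' => M i' k) := by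
  funext i'
  simp [NEm, nablaE, Matrix.add_apply, Matrix.smul_apply, smul_eq_mul, meu,
    Matrix.map_apply, Matrix.mulVec, Matrix.mul_apply, dotProduct]

lemma comm_PP {x y : σ} {B C' : Matrix (Fin n) (Fin n) (MS σ)}
    (h : ∀ v, nablaP x B (nablaP y C' v) = nablaP y C' (nablaP x B v))
    (M : Matrix (Fin n) (Fin n) (MS σ)) :
    NPm x B (NPm y C' M) = NPm y C' (NPm x B M) := by
  apply Matrix.ext; intro i' k
  calc NPm x B (NPm y C' M) i' k
      = nablaP x B (fun q => NPm y C' M q k) i' := congrFun (col_NPm x B _ k) i'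
    _ = nablaP x B (nablaP y C' (fun q => M q k)) i' := by rw [col_NPm]
    _ = nablaP y C' (nablaP x B (fun q => M q k)) i' := by rw [h]
    _ = nablaP y C' (fun q => NPm x B M q k) i' := by rw [col_NPm]
    _ = NPm y C' (NPm x B M) i' k := (congrFun (col_NPm y C' _ k) i').symm

lemma comm_EP {x y : σ} {B C' : Matrix (Fin n) (Fin n) (MS σ)}
    (h : ∀ v, nablaE x B (nablaP y C' v) = nablaP y C' (nablaE x B v))
    (M : Matrix (Fin n) (Fin n) (MS σ)) :
    NEm x B (NPm y C' M) = NPm y C' (NEm x B M) := by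
  apply Matrix.ext; intro i' k
  calc NEm x B (NPm y C' M) i' k
      = nablaE x B (fun q => NPm y C' M q k) i' := congrFun (col_NEm x B _ k) i'
    _ = nablaE x B (nablaP y C' (fun q => M q k)) i' := by rw [col_NPm]
    _ = nablaP y C' (nablaE x B (fun q => M q k)) i' := by rw [h]
    _ = nablaP y C' (fun q => NEm x B M q k) i' := by rw [col_NEm]
    _ = NPm y C' (NEm x B M) i' k := (congrFun (col_NPm y C' _ k) i').symm

lemma comm_EE {x y : σ} {B C' : Matrix (Fin n) (Fin n) (MS σ)}
    (h : ∀ v, nablaE x B (nablaE y C' v) = nablaE y C' (nablaE x B v))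
    (M : Matrix (Fin n) (Fin n) (MS σ)) :
    NEm x B (NEm y C' M) = NEm y C' (NEm x B M) := by
  apply Matrix.ext; intro i' k
  calc NEm x B (NEm y C' M) i' k
      = nablaE x B (fun q => NEm y C' M q k) i' := congrFun (col_NEm x B _ k) i'
    _ = nablaE x B (nablaE y C' (fun q => M q k)) i' := by rw [col_NEm]
    _ = nablaE y C' (nablaE x B (fun q => M q k)) i' := by rw [h]
    _ = nablaE y C' (fun q => NEm x B M q k) i' := by rw [col_NEm]
    _ = NEm y C' (NEm x B M) i' k := (congrFun (col_NEm y C' _ k) i').symm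

variable [DecidableEq σ]

lemma smul_smul_mat (c : LH) (X : Matrix (Fin n) (Fin n) LH) :
    hbar • c • X = (c * hbar) • X := by
  apply Matrix.ext; intro i j
  simp [Matrix.smul_apply, smul_eq_mul]
  ring

lemma cM_NPm (x : σ) (B M : Matrix (Fin n) (Fin n) (MS σ)) (d : σ →₀ ℕ) :
    cM d (NPm x B M) = (((d x + 1 : ℕ) : LH) * hbar) • cM (d + Finsupp.single x 1) M +
      ∑ p ∈ antidiagonal d, cM p.1 B * cM p.2 M := by
  unfold NPm
  rw [cM_add, cM_smul_hbarC, cM_mpd, cM_mul, smul_smul_mat]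

lemma cM_NEm (x : σ) (B M : Matrix (Fin n) (Fin n) (MS σ)) (d : σ →₀ ℕ) :
    cM d (NEm x B M) = (((d x : ℕ) : LH) * hbar) • cM d M +
      ∑ p ∈ antidiagonal d, cM p.1 B * cM p.2 M := by
  unfold NEm
  rw [cM_add, cM_smul_hbarC, cM_meu, cM_mul, smul_smul_mat]

end nmat

end QDM
namespace QDM
open Finset

section tlin

variable {n : ℕ}

/-- The operator `X ↦ m ħ X + (P X - X P)` on matrices over `ℂ((ħ⁻¹))`. -/
def Tapp (P : Matrix (Fin n) (Fin n) LH) (m : ℕ) (X : Matrix (Fin n) (Fin n) LH) :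
    Matrix (Fin n) (Fin n) LH :=
  ((m : ℕ) : LH) • (hbar • X) + (P * X - X * P)

lemma smul_zero_mat (c : LH) : c • (0 : Matrix (Fin n) (Fin n) LH) = 0 := by
  apply Matrix.ext; intro i j
  simp [Matrix.smul_apply, Matrix.zero_apply]

lemma msmul_msmul (a b : LH) (X : Matrix (Fin n) (Fin n) LH) : a • b • X = (a * b) • X := by
  apply Matrix.ext; intro i j
  simp [Matrix.smul_apply, smul_eq_mul]
  ring

lemma coeff_sum (z : ℤ) {ι : Type*} (t : Finset ι) (f : ι → LH) :
    (∑ k ∈ t, f k).coeff z = ∑ k ∈ t, (f k).coeff z :=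
  map_sum (HahnSeries.coeff.addMonoidHom z) f t

lemma Tapp_entry_coeff (P : Matrix (Fin n) (Fin n) LH) (hP : ∀ i j, IsConstL (P i j))
    (m : ℕ) (X : Matrix (Fin n) (Fin n) LH) (i j : Fin n) (z : ℤ) :
    ((Tapp P m X) i j).coeff z =
      (m : ℂ) * (X i j).coeff (z + 1) +
        ((∑ k, (P i k).coeff 0 * (X k j).coeff z) - ∑ k, (X i k).coeff z * (P k j).coeff 0) := by
  simp only [Tapp, Matrix.add_apply, Matrix.sub_apply, Matrix.smul_apply, smul_eq_mul,
    Matrix.mul_apply]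
  rw [HahnSeries.coeff_add, HahnSeries.coeff_sub]
  congr 1
  · rw [natCast_eq_C, C_mul_coeff, hbar_mul_coeff]
  congr 1
  · rw [coeff_sum]
    exact Finset.sum_congr rfl fun k _ => isConst_mul_coeff (hP i k) _ z
  · rw [coeff_sum]
    refine Finset.sum_congr rfl fun k _ => ?_
    rw [mul_comm (X i k), isConst_mul_coeff (hP k j) _ z, mul_comm]

lemma Tapp_ker (P : Matrix (Fin n) (Fin n) LH) (hP : ∀ i j, IsConstL (P i j))
    {m : ℕ} (hm : m ≠ 0) (X : Matrix (Fin n) (Fin n) LH) (hX : Tapp P m X = 0) : X = 0 := by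
  rcases Nat.eq_zero_or_pos n with hn | hn
  · subst hn; apply Matrix.ext; intro i j; exact i.elim0
  have hmC : (m : ℂ) ≠ 0 := Nat.cast_ne_zero.mpr hm
  have hrec : ∀ (z : ℤ) (i j : Fin n), (X i j).coeff (z + 1) =
      (m : ℂ)⁻¹ * ((∑ k, (X i k).coeff z * (P k j).coeff 0)
        - ∑ k, (P i k).coeff 0 * (X k j).coeff z) := by
    intro z i j
    have h0 : ((Tapp P m X) i j).coeff z = 0 := by rw [hX]; simp
    rw [Tapp_entry_coeff P hP m X i j z] at h0
    field_simp
    linear_combination h0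
  haveI : Nonempty (Fin n) := ⟨⟨0, hn⟩⟩
  have hzsne : (Finset.univ.image (fun q : Fin n × Fin n => (X q.1 q.2).order)).Nonempty :=
    Finset.Nonempty.image Finset.univ_nonempty _
  set z0 : ℤ := (Finset.univ.image (fun q : Fin n × Fin n => (X q.1 q.2).order)).min' hzsne
    with hz0
  have hlow : ∀ (z : ℤ), z < z0 → ∀ i j, (X i j).coeff z = 0 := by
    intro z hz i j
    by_cases h0 : X i j = 0
    · rw [h0]; exact HahnSeries.coeff_zero
    · refine HahnSeries.coeff_eq_zero_of_lt_order (lt_of_lt_of_le hz ?_)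
      apply Finset.min'_le
      exact Finset.mem_image.mpr ⟨(i, j), Finset.mem_univ _, rfl⟩
  have hstep : ∀ (k : ℕ), ∀ (i j : Fin n), (X i j).coeff (z0 - 1 + k) = 0 := by
    intro k
    induction k with
    | zero => intro i j; exact hlow _ (by omega) i j
    | succ k ih =>
      intro i j
      have he : (z0 - 1 + (k + 1 : ℕ) : ℤ) = (z0 - 1 + k) + 1 := by push_cast; ring
      rw [he, hrec (z0 - 1 + k) i j]
      have h1 : ∀ i' j' : Fin n, (X i' j').coeff (z0 - 1 + k) = 0 := ih
      simp [h1]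
  apply Matrix.ext; intro i j
  ext z
  simp only [Matrix.zero_apply, HahnSeries.coeff_zero]
  rcases lt_or_ge z z0 with h | h
  · exact hlow z h i j
  · have hz : z = z0 - 1 + ((z - (z0 - 1)).toNat : ℕ) := by omega
    rw [hz]; exact hstep _ i j

lemma Tapp_sub (P : Matrix (Fin n) (Fin n) LH) (m : ℕ) (X Y : Matrix (Fin n) (Fin n) LH) :
    Tapp P m (X - Y) = Tapp P m X - Tapp P m Y := by
  apply Matrix.ext; intro i j
  simp [Tapp, Matrix.mul_sub, Matrix.sub_mul, Matrix.add_apply, Matrix.sub_apply,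
    Matrix.smul_apply, smul_eq_mul, Matrix.mul_apply]
  ring

lemma Tapp_inj (P : Matrix (Fin n) (Fin n) LH) (hP : ∀ i j, IsConstL (P i j))
    {m : ℕ} (hm : m ≠ 0) : Function.Injective (Tapp P m) := by
  intro X Y h
  have h2 : Tapp P m (X - Y) = 0 := by rw [Tapp_sub, h, sub_self]
  have := Tapp_ker P hP hm _ h2
  exact sub_eq_zero.mp this

/-- `Tapp` as an `LH`-linear map. -/
def TappL (P : Matrix (Fin n) (Fin n) LH) (m : ℕ) :
    Matrix (Fin n) (Fin n) LH →ₗ[LH] Matrix (Fin n) (Fin n) LH where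
  toFun := Tapp P m
  map_add' X Y := by
    apply Matrix.ext; intro i j
    simp [Tapp, Matrix.mul_add, Matrix.add_mul, Matrix.add_apply, Matrix.sub_apply,
      Matrix.smul_apply, smul_eq_mul, Matrix.mul_apply]
    ring
  map_smul' c X := by
    apply Matrix.ext; intro i j
    simp [Tapp, Matrix.mul_smul, Matrix.smul_mul, Matrix.add_apply, Matrix.sub_apply,
      Matrix.smul_apply, smul_eq_mul, Matrix.mul_apply]
    rw [mul_add c, mul_sub c, Finset.mul_sum, Finset.mul_sum]
    congr 1
    · ring

lemma Tapp_surj (P : Matrix (Fin n) (Fin n) LH) (hP : ∀ i j, IsConstL (P i j))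
    {m : ℕ} (hm : m ≠ 0) : Function.Surjective (Tapp P m) := by
  have hinj : Function.Injective (TappL P m) := Tapp_inj P hP hm
  exact LinearMap.injective_iff_surjective.mp hinj

/-- A choice of inverse for `Tapp`. -/
def Tinv (P : Matrix (Fin n) (Fin n) LH) (m : ℕ) (Y : Matrix (Fin n) (Fin n) LH) :
    Matrix (Fin n) (Fin n) LH :=
  letI := Classical.propDecidable (Function.Surjective (Tapp P m))
  if h : Function.Surjective (Tapp P m) then (h Y).choose else 0

lemma Tapp_Tinv (P : Matrix (Fin n) (Fin n) LH) (m : ℕ)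
    (h : Function.Surjective (Tapp P m)) (Y : Matrix (Fin n) (Fin n) LH) :
    Tapp P m (Tinv P m Y) = Y := by
  unfold Tinv
  rw [dif_pos h]
  exact (h Y).choose_spec

end tlin

end QDM
namespace QDM
open Finset

section rec

variable {n r s : ℕ}

abbrev σt (r s : ℕ) : Type := Fin r ⊕ Fin (s + 1)

variable (WA : Fin r → (σt r s →₀ ℕ) → Matrix (Fin n) (Fin n) LH)
variable (WΩ : Fin (s + 1) → (σt r s →₀ ℕ) → Matrix (Fin n) (Fin n) LH)

open scoped Classical in
/-- One step of the recursion defining the coefficients of the fundamental solution. -/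
def Φ (F : (σt r s →₀ ℕ) → Matrix (Fin n) (Fin n) LH) (d : σt r s →₀ ℕ) :
    Matrix (Fin n) (Fin n) LH :=
  if hd : d = (0 : σt r s →₀ ℕ) then 1
  else if h : ∃ i, d (Sum.inr i) ≠ 0 then
    (((d (Sum.inr h.choose) : ℕ) : LH) * hbar)⁻¹ •
      (-(∑ p ∈ Finset.HasAntidiagonal.antidiagonal (d - Finsupp.single (Sum.inr h.choose) 1),
          WΩ h.choose p.1 * F p.2))
  else if h' : ∃ a, d (Sum.inl a) ≠ 0 then
    Tinv (WA h'.choose 0) (d (Sum.inl h'.choose))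
      (-(∑ p ∈ (Finset.HasAntidiagonal.antidiagonal d).erase (0, d), WA h'.choose p.1 * F p.2))
  else 0

lemma erase_antidiag_snd_ne {d : σt r s →₀ ℕ} {p : (σt r s →₀ ℕ) × (σt r s →₀ ℕ)}
    (hp : p ∈ (Finset.HasAntidiagonal.antidiagonal d).erase (0, d)) : p ∈ Finset.HasAntidiagonal.antidiagonal d ∧ p.2 ≠ d := by
  obtain ⟨hne, hmem⟩ := Finset.mem_erase.mp hp
  refine ⟨hmem, fun h2 => hne ?_⟩
  have h := antidiag_fst_add_snd hmem
  rw [h2] at h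
  have h1 : p.1 = 0 := by
    have h0 : p.1 + d = 0 + d := by rw [h, zero_add]
    exact add_right_cancel h0
  exact Prod.ext h1 h2

lemma Φ_congr {F G : (σt r s →₀ ℕ) → Matrix (Fin n) (Fin n) LH} {d : σt r s →₀ ℕ}
    (h : ∀ e, deg e < deg d → F e = G e) : Φ WA WΩ F d = Φ WA WΩ G d := by
  unfold Φ
  split_ifs with hd h1 h2
  · rfl
  · congr 2
    apply Finset.sum_congr rfl
    intro p hp
    rw [h p.2 _]
    have hle := antidiag_deg_snd_le hp
    have := deg_sub_single h1.choose_spec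
    omega
  · have hsum : ∑ p ∈ (Finset.HasAntidiagonal.antidiagonal d).erase (0, d), WA h2.choose p.1 * F p.2 =
        ∑ p ∈ (Finset.HasAntidiagonal.antidiagonal d).erase (0, d), WA h2.choose p.1 * G p.2 := by
      apply Finset.sum_congr rfl
      intro p hp
      obtain ⟨hmem, hne⟩ := erase_antidiag_snd_ne hp
      rw [h p.2 (antidiag_deg_snd_lt hmem hne)]
    rw [hsum]
  · rfl

/-- Iterates of the recursion. -/
def Lrec : ℕ → (σt r s →₀ ℕ) → Matrix (Fin n) (Fin n) LH
  | 0 => fun _ => 0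
  | (N + 1) => Φ WA WΩ (Lrec N)

lemma Lrec_stable : ∀ (N : ℕ) (d : σt r s →₀ ℕ) (K M : ℕ), deg d = N → deg d < K →
    deg d < M → Lrec WA WΩ K d = Lrec WA WΩ M d := by
  intro N
  induction N using Nat.strong_induction_on with
  | _ N IH =>
    intro d K M hdN hK hM
    obtain ⟨K', rfl⟩ : ∃ K', K = K' + 1 := ⟨K - 1, by omega⟩
    obtain ⟨M', rfl⟩ : ∃ M', M = M' + 1 := ⟨M - 1, by omega⟩
    show Φ WA WΩ (Lrec WA WΩ K') d = Φ WA WΩ (Lrec WA WΩ M') d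
    apply Φ_congr
    intro e he
    exact IH (deg e) (by omega) e K' M' rfl (by omega) (by omega)

/-- The coefficients of the fundamental solution. -/
def Lc (d : σt r s →₀ ℕ) : Matrix (Fin n) (Fin n) LH := Lrec WA WΩ (deg d + 1) d

lemma Lc_fix (d : σt r s →₀ ℕ) : Lc WA WΩ d = Φ WA WΩ (Lc WA WΩ) d := by
  show Φ WA WΩ (Lrec WA WΩ (deg d)) d = _
  apply Φ_congr
  intro e he
  exact Lrec_stable WA WΩ (deg e) e (deg d) (deg e + 1) rfl he (by omega)

lemma Lc_zero : Lc WA WΩ 0 = 1 := by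
  rw [Lc_fix]
  unfold Φ
  rw [dif_pos rfl]

lemma Lc_kill_t {d : σt r s →₀ ℕ} (h : ∃ i, d (Sum.inr i) ≠ 0) :
    ∃ i, d (Sum.inr i) ≠ 0 ∧
      (((d (Sum.inr i) : ℕ) : LH) * hbar) • Lc WA WΩ d +
        ∑ p ∈ Finset.HasAntidiagonal.antidiagonal (d - Finsupp.single (Sum.inr i) 1),
          WΩ i p.1 * Lc WA WΩ p.2 = 0 := by
  have hd : d ≠ 0 := by
    rintro rfl
    obtain ⟨i, hi⟩ := h
    simp at hi
  refine ⟨h.choose, h.choose_spec, ?_⟩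
  have hfix := Lc_fix WA WΩ d
  rw [Φ, dif_neg hd, dif_pos h] at hfix
  have hcc : (((d (Sum.inr h.choose) : ℕ) : LH) * hbar) ≠ 0 :=
    mul_ne_zero (natCast_ne_zero h.choose_spec) hbar_ne_zero
  rw [hfix, msmul_msmul, mul_inv_cancel₀ hcc, one_smul]
  exact neg_add_cancel _

lemma Lc_kill_q {d : σt r s →₀ ℕ} (hd : d ≠ 0) (h : ¬∃ i, d (Sum.inr i) ≠ 0)
    (hsurj : ∀ (a : Fin r) (m : ℕ), m ≠ 0 → Function.Surjective (Tapp (WA a 0) m)) :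
    ∃ a, d (Sum.inl a) ≠ 0 ∧
      Tapp (WA a 0) (d (Sum.inl a)) (Lc WA WΩ d) +
        ∑ p ∈ (Finset.HasAntidiagonal.antidiagonal d).erase (0, d), WA a p.1 * Lc WA WΩ p.2 = 0 := by
  have h' : ∃ a, d (Sum.inl a) ≠ 0 := by
    by_contra hno
    push_neg at hno
    push_neg at h
    apply hd
    ext x
    cases x with
    | inl a => simpa using hno a
    | inr i => simpa using h i
  refine ⟨h'.choose, h'.choose_spec, ?_⟩
  have hfix := Lc_fix WA WΩ d
  rw [Φ, dif_neg hd, dif_neg h, dif_pos h'] at hfix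
  rw [hfix, Tapp_Tinv _ _ (hsurj _ _ h'.choose_spec)]
  exact neg_add_cancel _

end rec

end QDM
namespace QDM
open Finset

section forms

variable {σ : Type} [DecidableEq σ] {n : ℕ}

lemma mem_antidiag_self (d : σ →₀ ℕ) : ((0 : σ →₀ ℕ), d) ∈ antidiagonal d :=
  mem_antidiagonal.mpr (zero_add d)

lemma mC_mul (P Q : Matrix (Fin n) (Fin n) LH) :
    (mC P : Matrix (Fin n) (Fin n) (MS σ)) * mC Q = mC (P * Q) := by
  apply Matrix.ext; intro i j
  simp only [mC, Matrix.mul_apply, Matrix.map_apply, ← map_mul, ← map_sum]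

lemma Tapp_zero (P : Matrix (Fin n) (Fin n) LH) (m : ℕ) : Tapp P m 0 = 0 := by
  apply Matrix.ext; intro i j
  simp [Tapp, Matrix.add_apply, Matrix.sub_apply, Matrix.smul_apply, Matrix.zero_apply,
    smul_eq_mul, Matrix.mul_apply]

lemma cM_NPm_sub_single {x : σ} {d : σ →₀ ℕ} (hx : d x ≠ 0)
    (B M : Matrix (Fin n) (Fin n) (MS σ)) :
    cM (d - Finsupp.single x 1) (NPm x B M) =
      (((d x : ℕ) : LH) * hbar) • cM d M +
        ∑ p ∈ antidiagonal (d - Finsupp.single x 1), cM p.1 B * cM p.2 M := by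
  rw [cM_NPm, apply_sub_single hx, sub_single_add hx]

lemma cM_Q_form (x : σ) (B M : Matrix (Fin n) (Fin n) (MS σ)) (d : σ →₀ ℕ) :
    cM d (NEm x B M - M * mC (m0 B)) =
      Tapp (m0 B) (d x) (cM d M) +
        ∑ p ∈ (antidiagonal d).erase (0, d), cM p.1 B * cM p.2 M := by
  rw [cM_sub, cM_NEm, cM_mul_mC, ← Finset.add_sum_erase _ _ (mem_antidiag_self d),
    m0_eq_cM]
  unfold Tapp
  rw [msmul_msmul]
  abel

end forms

end QDM

namespace QDM
open Finset

section forms2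

variable {σ : Type} [DecidableEq σ] {n : ℕ}

lemma cM_NEm_zero (x : σ) (B M : Matrix (Fin n) (Fin n) (MS σ)) :
    cM 0 (NEm x B M) = cM 0 B * cM 0 M := by
  rw [cM_NEm]
  have h0 : ((0 : σ →₀ ℕ) x : ℕ) = 0 := rfl
  rw [h0, Nat.cast_zero, zero_mul, Finsupp.antidiagonal_zero, Finset.sum_singleton]
  have hz : ((0 : LH) • cM (0 : σ →₀ ℕ) M) = 0 := by
    apply Matrix.ext; intro i j
    simp [Matrix.smul_apply, Matrix.zero_apply]
  rw [hz, zero_add]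

lemma Tapp_zero_m_one (P : Matrix (Fin n) (Fin n) LH) : Tapp P 0 1 = 0 := by
  apply Matrix.ext; intro i j
  simp [Tapp, Matrix.add_apply, Matrix.sub_apply, Matrix.smul_apply, smul_eq_mul,
    Matrix.mul_apply, Matrix.one_apply, mul_ite, ite_mul, mul_one, one_mul, mul_zero,
    zero_mul, Finset.sum_ite_eq, Finset.sum_ite_eq']

end forms2

end QDM
namespace QDM
open Finset

section main

variable {n r s : ℕ}
variable (A : Fin r → Matrix (Fin n) (Fin n) (MS (σt r s)))
variable (Ω : Fin (s + 1) → Matrix (Fin n) (Fin n) (MS (σt r s)))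

/-- Coefficient family of the `A` matrices. -/
def WAof : Fin r → (σt r s →₀ ℕ) → Matrix (Fin n) (Fin n) LH := fun a e => cM e (A a)

/-- Coefficient family of the `Ω` matrices. -/
def WΩof : Fin (s + 1) → (σt r s →₀ ℕ) → Matrix (Fin n) (Fin n) LH := fun i e => cM e (Ω i)

/-- The candidate fundamental solution. -/
def Lsol : Matrix (Fin n) (Fin n) (MS (σt r s)) :=
  Matrix.of fun i j => (fun d => Lc (WAof A) (WΩof Ω) d i j : MS (σt r s))

lemma cM_Lsol (d : σt r s →₀ ℕ) : cM d (Lsol A Ω) = Lc (WAof A) (WΩof Ω) d := by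
  apply Matrix.ext; intro i j
  rfl

lemma main_vanish
    (hp : ∀ a i j, IsConstL (MvPowerSeries.constantCoeff (A a i j)))
    (hQQ : ∀ a b v, nablaE (Sum.inl a) (A a) (nablaE (Sum.inl b) (A b) v)
         = nablaE (Sum.inl b) (A b) (nablaE (Sum.inl a) (A a) v))
    (hQT : ∀ a i v, nablaE (Sum.inl a) (A a) (nablaP (Sum.inr i) (Ω i) v)
         = nablaP (Sum.inr i) (Ω i) (nablaE (Sum.inl a) (A a) v))
    (hTT : ∀ i j v, nablaP (Sum.inr i) (Ω i) (nablaP (Sum.inr j) (Ω j) v)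
         = nablaP (Sum.inr j) (Ω j) (nablaP (Sum.inr i) (Ω i) v)) :
    ∀ (N : ℕ) (d : σt r s →₀ ℕ), deg d = N →
      (∀ i, cM d (NPm (Sum.inr i) (Ω i) (Lsol A Ω)) = 0) ∧
      (∀ a, cM d (NEm (Sum.inl a) (A a) (Lsol A Ω) - Lsol A Ω * mC (m0 (A a))) = 0) := by
  have hconst : ∀ a (i j : Fin n), IsConstL ((m0 (A a)) i j) := fun a i j => hp a i j
  have hWA0 : ∀ a, WAof A a 0 = m0 (A a) := fun a => (m0_eq_cM _).symm
  have hsurj : ∀ (a : Fin r) (m : ℕ), m ≠ 0 → Function.Surjective (Tapp (WAof A a 0) m) := by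
    intro a m hm
    rw [hWA0 a]
    exact Tapp_surj _ (hconst a) hm
  have commPP := fun (i j : Fin (s + 1)) M => comm_PP (hTT i j) M
  have commEP := fun (a : Fin r) (i : Fin (s + 1)) M => comm_EP (hQT a i) M
  have commEE := fun (a b : Fin r) M => comm_EE (hQQ a b) M
  have hpAc : ∀ a b, m0 (A a) * m0 (A b) = m0 (A b) * m0 (A a) := by
    intro a b
    have h1 := commEE a b 1
    rw [NEm_one, NEm_one] at h1
    have h2 := congrArg (cM 0) h1
    rw [cM_NEm_zero, cM_NEm_zero] at h2
    rw [m0_eq_cM, m0_eq_cM]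
    exact h2
  have keyRS : ∀ (j : Fin (s + 1)) (a : Fin r),
      NPm (Sum.inr j) (Ω j) (NEm (Sum.inl a) (A a) (Lsol A Ω) - Lsol A Ω * mC (m0 (A a)))
        = NEm (Sum.inl a) (A a) (NPm (Sum.inr j) (Ω j) (Lsol A Ω))
          - NPm (Sum.inr j) (Ω j) (Lsol A Ω) * mC (m0 (A a)) := by
    intro j a
    rw [NPm_sub, NPm_mul_mC, ← commEP a j (Lsol A Ω)]
  have keySS : ∀ (a b : Fin r),
      NEm (Sum.inl b) (A b) (NEm (Sum.inl a) (A a) (Lsol A Ω) - Lsol A Ω * mC (m0 (A a)))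
          - (NEm (Sum.inl a) (A a) (Lsol A Ω) - Lsol A Ω * mC (m0 (A a))) * mC (m0 (A b))
        = NEm (Sum.inl a) (A a) (NEm (Sum.inl b) (A b) (Lsol A Ω) - Lsol A Ω * mC (m0 (A b)))
          - (NEm (Sum.inl b) (A b) (Lsol A Ω) - Lsol A Ω * mC (m0 (A b))) * mC (m0 (A a)) := by
    intro a b
    rw [NEm_sub, NEm_sub, NEm_mul_mC, NEm_mul_mC, Matrix.sub_mul, Matrix.sub_mul,
      commEE a b (Lsol A Ω),
      Matrix.mul_assoc (Lsol A Ω) (mC (m0 (A a))) (mC (m0 (A b))),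
      Matrix.mul_assoc (Lsol A Ω) (mC (m0 (A b))) (mC (m0 (A a))),
      mC_mul, mC_mul, hpAc a b]
    abel
  intro N
  induction N using Nat.strong_induction_on with
  | _ N IH =>
  intro d hdN
  have IHr : ∀ (i : Fin (s + 1)) (e : σt r s →₀ ℕ), deg e < N →
      cM e (NPm (Sum.inr i) (Ω i) (Lsol A Ω)) = 0 :=
    fun i e he => (IH (deg e) he e rfl).1 i
  have IHs : ∀ (a : Fin r) (e : σt r s →₀ ℕ), deg e < N →
      cM e (NEm (Sum.inl a) (A a) (Lsol A Ω) - Lsol A Ω * mC (m0 (A a))) = 0 :=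
    fun a e he => (IH (deg e) he e rfl).2 a
  have killT : ∀ {e : σt r s →₀ ℕ}, (∃ i, e (Sum.inr i) ≠ 0) →
      ∃ j, e (Sum.inr j) ≠ 0 ∧
        cM (e - Finsupp.single (Sum.inr j) 1) (NPm (Sum.inr j) (Ω j) (Lsol A Ω)) = 0 := by
    intro e h
    obtain ⟨j, hj, heq⟩ := Lc_kill_t (WAof A) (WΩof Ω) h
    refine ⟨j, hj, ?_⟩
    rw [cM_NPm_sub_single hj]
    simp only [cM_Lsol]
    simp only [WΩof] at heq
    exact heq
  have killQ : ∀ {e : σt r s →₀ ℕ}, e ≠ 0 → (¬∃ i, e (Sum.inr i) ≠ 0) →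
      ∃ b, e (Sum.inl b) ≠ 0 ∧
        cM e (NEm (Sum.inl b) (A b) (Lsol A Ω) - Lsol A Ω * mC (m0 (A b))) = 0 := by
    intro e he h
    obtain ⟨b, hb, heq⟩ := Lc_kill_q (WAof A) (WΩof Ω) he h hsurj
    refine ⟨b, hb, ?_⟩
    rw [cM_Q_form]
    simp only [cM_Lsol]
    rw [m0_eq_cM]
    simp only [WAof] at heq
    exact heq
  constructor
  · -- the `R` residues vanish
    intro i
    obtain ⟨j, hj, hkill⟩ := killT (e := d + Finsupp.single (Sum.inr i) 1)
      ⟨i, by simp [Finsupp.add_apply, Finsupp.single_apply]⟩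
    by_cases hij : j = i
    · subst hij
      rwa [add_tsub_cancel_right] at hkill
    · have hdj : d (Sum.inr j) ≠ 0 := by
        have hne : (Sum.inr i : σt r s) ≠ Sum.inr j :=
          fun hcon => hij (Sum.inr_injective hcon).symm
        have h' := hj
        rw [Finsupp.add_apply, Finsupp.single_apply, if_neg hne, add_zero] at h'
        exact h'
      have hRRe := congrArg (cM (d - Finsupp.single (Sum.inr j) 1)) (commPP i j (Lsol A Ω))
      rw [cM_NPm_sub_single hdj, cM_NPm] at hRRe
      have hdegs : deg (d - Finsupp.single (Sum.inr j) 1) < N := by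
        have := deg_sub_single hdj; omega
      have hsums1 : ∑ p ∈ antidiagonal (d - Finsupp.single (Sum.inr j) 1),
          cM p.1 (Ω i) * cM p.2 (NPm (Sum.inr j) (Ω j) (Lsol A Ω)) = 0 :=
        Finset.sum_eq_zero fun p hp => by
          rw [IHr j p.2 (lt_of_le_of_lt (antidiag_deg_snd_le hp) hdegs), mul_zero]
      have hsums2 : ∑ p ∈ antidiagonal (d - Finsupp.single (Sum.inr j) 1),
          cM p.1 (Ω j) * cM p.2 (NPm (Sum.inr i) (Ω i) (Lsol A Ω)) = 0 :=
        Finset.sum_eq_zero fun p hp => by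
          rw [IHr i p.2 (lt_of_le_of_lt (antidiag_deg_snd_le hp) hdegs), mul_zero]
      have he : (d - Finsupp.single (Sum.inr j) 1) + Finsupp.single (Sum.inr i) 1
          = (d + Finsupp.single (Sum.inr i) 1) - Finsupp.single (Sum.inr j) 1 :=
        tsub_add_eq_add_tsub (single_le hdj)
      rw [he, hkill, hsums1, hsums2] at hRRe
      simp only [smul_zero_mat, smul_zero, add_zero, zero_add] at hRRe
      have hc : (((d (Sum.inr j) : ℕ) : LH) * hbar) ≠ 0 :=
        mul_ne_zero (natCast_ne_zero hdj) hbar_ne_zero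
      have hfin : cM d (NPm (Sum.inr i) (Ω i) (Lsol A Ω))
          = (((d (Sum.inr j) : ℕ) : LH) * hbar)⁻¹ •
            ((((d (Sum.inr j) : ℕ) : LH) * hbar) •
              cM d (NPm (Sum.inr i) (Ω i) (Lsol A Ω))) := by
        rw [msmul_msmul, inv_mul_cancel₀ hc, one_smul]
      rw [hfin, ← hRRe, smul_zero_mat]
  · -- the `S` residues vanish
    intro a
    by_cases hT : ∃ j, d (Sum.inr j) ≠ 0
    · obtain ⟨j, hj⟩ := hT
      have hRSe := congrArg (cM (d - Finsupp.single (Sum.inr j) 1)) (keyRS j a)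
      rw [cM_NPm_sub_single hj,
        cM_Q_form (Sum.inl a) (A a) (NPm (Sum.inr j) (Ω j) (Lsol A Ω))] at hRSe
      have hdegs : deg (d - Finsupp.single (Sum.inr j) 1) < N := by
        have := deg_sub_single hj; omega
      rw [IHr j _ hdegs, Tapp_zero] at hRSe
      have hsuml : ∑ p ∈ antidiagonal (d - Finsupp.single (Sum.inr j) 1),
          cM p.1 (Ω j) *
            cM p.2 (NEm (Sum.inl a) (A a) (Lsol A Ω) - Lsol A Ω * mC (m0 (A a))) = 0 :=
        Finset.sum_eq_zero fun p hp => by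
          rw [IHs a p.2 (lt_of_le_of_lt (antidiag_deg_snd_le hp) hdegs), mul_zero]
      have hsumr : ∑ p ∈ (antidiagonal (d - Finsupp.single (Sum.inr j) 1)).erase
            (0, d - Finsupp.single (Sum.inr j) 1),
          cM p.1 (A a) * cM p.2 (NPm (Sum.inr j) (Ω j) (Lsol A Ω)) = 0 :=
        Finset.sum_eq_zero fun p hp => by
          obtain ⟨hmem, -⟩ := erase_antidiag_snd_ne hp
          rw [IHr j p.2 (lt_of_le_of_lt (antidiag_deg_snd_le hmem) hdegs), mul_zero]
      rw [hsuml, hsumr] at hRSe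
      simp only [add_zero, zero_add] at hRSe
      have hc : (((d (Sum.inr j) : ℕ) : LH) * hbar) ≠ 0 :=
        mul_ne_zero (natCast_ne_zero hj) hbar_ne_zero
      have hfin : cM d (NEm (Sum.inl a) (A a) (Lsol A Ω) - Lsol A Ω * mC (m0 (A a)))
          = (((d (Sum.inr j) : ℕ) : LH) * hbar)⁻¹ •
            ((((d (Sum.inr j) : ℕ) : LH) * hbar) •
              cM d (NEm (Sum.inl a) (A a) (Lsol A Ω) - Lsol A Ω * mC (m0 (A a)))) := by
        rw [msmul_msmul, inv_mul_cancel₀ hc, one_smul]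
      rw [hfin, hRSe, smul_zero_mat]
    · by_cases hd0 : d = 0
      · subst hd0
        rw [cM_Q_form, cM_Lsol, Lc_zero, Finsupp.antidiagonal_zero, Finset.erase_singleton,
          Finset.sum_empty, add_zero]
        have h0 : ((0 : σt r s →₀ ℕ) (Sum.inl a)) = 0 := rfl
        rw [h0]
        exact Tapp_zero_m_one _
      · obtain ⟨b, hb, hSb⟩ := killQ hd0 hT
        by_cases hba : b = a
        · subst hba; exact hSb
        · have hSSe := congrArg (cM d) (keySS a b)
          rw [cM_Q_form (Sum.inl b) (A b)
              (NEm (Sum.inl a) (A a) (Lsol A Ω) - Lsol A Ω * mC (m0 (A a))),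
            cM_Q_form (Sum.inl a) (A a)
              (NEm (Sum.inl b) (A b) (Lsol A Ω) - Lsol A Ω * mC (m0 (A b)))] at hSSe
          have hsl : ∑ p ∈ (antidiagonal d).erase (0, d),
              cM p.1 (A b) *
                cM p.2 (NEm (Sum.inl a) (A a) (Lsol A Ω) - Lsol A Ω * mC (m0 (A a))) = 0 :=
            Finset.sum_eq_zero fun p hp => by
              obtain ⟨hmem, hne⟩ := erase_antidiag_snd_ne hp
              rw [IHs a p.2 (by have := antidiag_deg_snd_lt hmem hne; omega), mul_zero]
          have hsr : ∑ p ∈ (antidiagonal d).erase (0, d),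
              cM p.1 (A a) *
                cM p.2 (NEm (Sum.inl b) (A b) (Lsol A Ω) - Lsol A Ω * mC (m0 (A b))) = 0 :=
            Finset.sum_eq_zero fun p hp => by
              obtain ⟨hmem, hne⟩ := erase_antidiag_snd_ne hp
              rw [IHs b p.2 (by have := antidiag_deg_snd_lt hmem hne; omega), mul_zero]
          rw [hSb, Tapp_zero, hsl, hsr] at hSSe
          simp only [add_zero, zero_add] at hSSe
          exact Tapp_ker (m0 (A b)) (hconst b) hb _ hSSe

end main

end QDM
namespace QDM
open Finset

section finale

variable {n r s : ℕ}
variable (A : Fin r → Matrix (Fin n) (Fin n) (MS (σt r s)))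
variable (Ω : Fin (s + 1) → Matrix (Fin n) (Fin n) (MS (σt r s)))

lemma killT_sol {e : σt r s →₀ ℕ} (h : ∃ i, e (Sum.inr i) ≠ 0) :
    ∃ j, e (Sum.inr j) ≠ 0 ∧
      cM (e - Finsupp.single (Sum.inr j) 1) (NPm (Sum.inr j) (Ω j) (Lsol A Ω)) = 0 := by
  obtain ⟨j, hj, heq⟩ := Lc_kill_t (WAof A) (WΩof Ω) h
  refine ⟨j, hj, ?_⟩
  rw [cM_NPm_sub_single hj]
  simp only [cM_Lsol]
  simp only [WΩof] at heq
  exact heq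

lemma killQ_sol (hp : ∀ a i j, IsConstL (MvPowerSeries.constantCoeff (A a i j)))
    {e : σt r s →₀ ℕ} (he : e ≠ 0) (h : ¬∃ i, e (Sum.inr i) ≠ 0) :
    ∃ b, e (Sum.inl b) ≠ 0 ∧
      cM e (NEm (Sum.inl b) (A b) (Lsol A Ω) - Lsol A Ω * mC (m0 (A b))) = 0 := by
  have hconst : ∀ a (i j : Fin n), IsConstL ((m0 (A a)) i j) := fun a i j => hp a i j
  have hsurj : ∀ (a : Fin r) (m : ℕ), m ≠ 0 → Function.Surjective (Tapp (WAof A a 0) m) := by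
    intro a m hm
    rw [show WAof A a 0 = m0 (A a) from (m0_eq_cM _).symm]
    exact Tapp_surj _ (hconst a) hm
  obtain ⟨b, hb, heq⟩ := Lc_kill_q (WAof A) (WΩof Ω) he h hsurj
  refine ⟨b, hb, ?_⟩
  rw [cM_Q_form]
  simp only [cM_Lsol]
  rw [m0_eq_cM]
  simp only [WAof] at heq
  exact heq

lemma uniqueness (hp : ∀ a i j, IsConstL (MvPowerSeries.constantCoeff (A a i j)))
    (M : Matrix (Fin n) (Fin n) (MS (σt r s)))
    (hM1 : ∀ i, NPm (Sum.inr i) (Ω i) M = 0)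
    (hM2 : ∀ a, NEm (Sum.inl a) (A a) M - M * mC (m0 (A a)) = 0)
    (hM3 : m0 M = 1) : M = Lsol A Ω := by
  suffices huniq : ∀ (N : ℕ) (d : σt r s →₀ ℕ), deg d = N → cM d M = cM d (Lsol A Ω) by
    exact ext_of_cM fun d => huniq (deg d) d rfl
  intro N
  induction N using Nat.strong_induction_on with
  | _ N IH =>
  intro d hdN
  have IH' : ∀ e : σt r s →₀ ℕ, deg e < N → cM e M = cM e (Lsol A Ω) :=
    fun e he => IH (deg e) he e rfl
  by_cases hd0 : d = 0
  · subst hd0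
    rw [← m0_eq_cM, hM3, cM_Lsol, Lc_zero]
  · by_cases hT : ∃ i, d (Sum.inr i) ≠ 0
    · obtain ⟨j, hj, hkill⟩ := killT_sol A Ω hT
      have hMk : cM (d - Finsupp.single (Sum.inr j) 1) (NPm (Sum.inr j) (Ω j) M) = 0 := by
        rw [hM1 j, cM_zero]
      rw [cM_NPm_sub_single hj] at hkill hMk
      have hsum : ∑ p ∈ antidiagonal (d - Finsupp.single (Sum.inr j) 1),
            cM p.1 (Ω j) * cM p.2 M
          = ∑ p ∈ antidiagonal (d - Finsupp.single (Sum.inr j) 1),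
            cM p.1 (Ω j) * cM p.2 (Lsol A Ω) :=
        Finset.sum_congr rfl fun p hp => by
          rw [IH' p.2 (lt_of_le_of_lt (antidiag_deg_snd_le hp)
            (by have := deg_sub_single hj; omega))]
      rw [hsum] at hMk
      have h2 : (((d (Sum.inr j) : ℕ) : LH) * hbar) • cM d M
          = (((d (Sum.inr j) : ℕ) : LH) * hbar) • cM d (Lsol A Ω) :=
        add_right_cancel (hMk.trans hkill.symm)
      have hc : (((d (Sum.inr j) : ℕ) : LH) * hbar) ≠ 0 :=
        mul_ne_zero (natCast_ne_zero hj) hbar_ne_zero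
      calc cM d M = (((d (Sum.inr j) : ℕ) : LH) * hbar)⁻¹ •
              ((((d (Sum.inr j) : ℕ) : LH) * hbar) • cM d M) := by
            rw [msmul_msmul, inv_mul_cancel₀ hc, one_smul]
        _ = (((d (Sum.inr j) : ℕ) : LH) * hbar)⁻¹ •
              ((((d (Sum.inr j) : ℕ) : LH) * hbar) • cM d (Lsol A Ω)) := by rw [h2]
        _ = cM d (Lsol A Ω) := by rw [msmul_msmul, inv_mul_cancel₀ hc, one_smul]
    · obtain ⟨b, hb, hkill⟩ := killQ_sol A Ω hp hd0 hT
      have hMk : cM d (NEm (Sum.inl b) (A b) M - M * mC (m0 (A b))) = 0 := by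
        rw [hM2 b, cM_zero]
      rw [cM_Q_form (Sum.inl b) (A b) M] at hMk
      rw [cM_Q_form (Sum.inl b) (A b) (Lsol A Ω)] at hkill
      have hsum : ∑ p ∈ (antidiagonal d).erase (0, d), cM p.1 (A b) * cM p.2 M
          = ∑ p ∈ (antidiagonal d).erase (0, d), cM p.1 (A b) * cM p.2 (Lsol A Ω) :=
        Finset.sum_congr rfl fun p hp => by
          obtain ⟨hmem, hne⟩ := erase_antidiag_snd_ne hp
          rw [IH' p.2 (by have := antidiag_deg_snd_lt hmem hne; omega)]
      rw [hsum] at hMk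
      have h2 : Tapp (m0 (A b)) (d (Sum.inl b)) (cM d M)
          = Tapp (m0 (A b)) (d (Sum.inl b)) (cM d (Lsol A Ω)) :=
        add_right_cancel (hMk.trans hkill.symm)
      exact Tapp_inj (m0 (A b)) (fun i j => hp b i j) hb h2

end finale

end QDM

/-- existence and uniqueness of the normalized fundamental solution
of an abstract quantum D-module. -/
theorem statement0 (n r s : ℕ) (hn : 1 ≤ n) (hr : 1 ≤ r)
    (A : Fin r → Matrix (Fin n) (Fin n) (MvPowerSeries (Fin r ⊕ Fin (s + 1)) LH))
    (Ω : Fin (s + 1) → Matrix (Fin n) (Fin n) (MvPowerSeries (Fin r ⊕ Fin (s + 1)) LH))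
    -- entries of the connection matrices lie in `ℂ[ħ][[Q,t]]`
    (hA : ∀ a, MatPolyH (A a)) (hΩ : ∀ i, MatPolyH (Ω i))
    -- `p_a := A_a|_{Q=t=0}` has entries in `ℂ` (is independent of `ħ`)
    (hp : ∀ a i j, IsConstL (MvPowerSeries.constantCoeff (A a i j)))
    -- the operators `∇^a = ħ Q^a ∂/∂Q^a + A_a`, `∇_i = ħ ∂/∂t^i + Ω_i` pairwise commute
    (hQQ : ∀ a b v, nablaE (Sum.inl a) (A a) (nablaE (Sum.inl b) (A b) v)
         = nablaE (Sum.inl b) (A b) (nablaE (Sum.inl a) (A a) v))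
    (hQT : ∀ a i v, nablaE (Sum.inl a) (A a) (nablaP (Sum.inr i) (Ω i) v)
         = nablaP (Sum.inr i) (Ω i) (nablaE (Sum.inl a) (A a) v))
    (hTT : ∀ i j v, nablaP (Sum.inr i) (Ω i) (nablaP (Sum.inr j) (Ω j) v)
         = nablaP (Sum.inr j) (Ω j) (nablaP (Sum.inr i) (Ω i) v)) :
    ∃! L : Matrix (Fin n) (Fin n) (MvPowerSeries (Fin r ⊕ Fin (s + 1)) LH),
      (∀ i, hbarC (Fin r ⊕ Fin (s + 1)) • mpd (Sum.inr i) L + Ω i * L = 0) ∧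
      (∀ a, hbarC (Fin r ⊕ Fin (s + 1)) • meu (Sum.inl a) L + A a * L - L * mC (m0 (A a)) = 0) ∧
      m0 L = 1 := by
  have hvan := QDM.main_vanish A Ω hp hQQ hQT hTT
  refine ⟨QDM.Lsol A Ω, ⟨?_, ?_, ?_⟩, ?_⟩
  · intro i
    have hR : QDM.NPm (Sum.inr i) (Ω i) (QDM.Lsol A Ω) = 0 :=
      QDM.ext_of_cM fun d => by rw [(hvan (QDM.deg d) d rfl).1 i, QDM.cM_zero]
    exact hR
  · intro a
    have hS : QDM.NEm (Sum.inl a) (A a) (QDM.Lsol A Ω)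
        - QDM.Lsol A Ω * mC (m0 (A a)) = 0 :=
      QDM.ext_of_cM fun d => by rw [(hvan (QDM.deg d) d rfl).2 a, QDM.cM_zero]
    exact hS
  · show m0 (QDM.Lsol A Ω) = 1
    rw [QDM.m0_eq_cM, QDM.cM_Lsol, QDM.Lc_zero]
  · rintro M ⟨hM1, hM2, hM3⟩
    exact QDM.uniqueness A Ω hp M (fun i => hM1 i) (fun a => hM2 a) hM3
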